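/- Let R be a Noetherian local domain with fraction field Q, and let R̃ be an intermediate ring R ⊆ R̃ ⊆ Q that is a discrete valuation ring and is finitely generated as an R-module. Let C = {x ∈ R : x·R̃ ⊆ R} be the conductor. Then for every nonzero ideal I of R one has C ⊆ tr(I). -/

import Mathlib

set_option synthInstance.maxHeartbeats 1000000
set_option maxHeartbeats 1000000

open IsLocalRing

namespace TraceCond

/-- The trace ideal of an ideal `I` of `R`: the sum `Σ_φ φ(I)` over all
`R`-linear maps `φ : I → R`. -/
noncomputable def traceIdeal {R : Type*} [CommRing R] (I : Ideal R) : Ideal R :=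
  ⨆ φ : ↥I →ₗ[R] R, LinearMap.range φ

/-- The conductor `C_{R̃/R} = {x ∈ R : x·R̃ ⊆ R}` of an intermediate ring
`R ⊆ R̃ ⊆ Q`. -/
def conductorSet (R : Type*) [CommRing R] {Q : Type*} [CommRing Q] [Algebra R Q]
    (Rt : Subalgebra R Q) : Set R :=
  {x : R | ∀ y ∈ Rt, ∃ r : R, algebraMap R Q r = algebraMap R Q x * y}

end TraceCond

open TraceCond

/-- if `R` is a Noetherian local domain and `R ⊆ R̃ ⊆ Q(R)` with
`R̃` a DVR which is a finite `R`-module, then the conductor `C_{R̃/R}` is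
contained in the trace ideal of every nonzero ideal `I` of `R`. -/
theorem stmt_17 (R : Type*) [CommRing R] [IsDomain R] [IsNoetherianRing R]
    [IsLocalRing R]
    (Rt : Subalgebra R (FractionRing R)) [IsDomain ↥Rt]
    [IsDiscreteValuationRing ↥Rt] [Module.Finite R ↥Rt]
    (I : Ideal R) (hI : I ≠ ⊥) :
    conductorSet R Rt ⊆ (traceIdeal I : Set R) := by
  classical
  intro c hc
  have hinj : Function.Injective (algebraMap R (FractionRing R)) :=
    IsFractionRing.injective R _
  set ι := algebraMap R ↥Rt with hιdef
  have hcoe : ∀ x : R, ((ι x : ↥Rt) : FractionRing R) = algebraMap R (FractionRing R) x :=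
    fun x => rfl
  have hιinj : Function.Injective ι := by
    intro x y h
    apply hinj
    rw [← hcoe x, ← hcoe y, h]
  set v := IsDiscreteValuationRing.addVal ↥Rt with hvdef
  -- the set of valuations of nonzero elements of I
  set S : Set ℕ := {n : ℕ | ∃ b ∈ I, v (ι b) = (n : ℕ∞)} with hSdef
  have hSne : S.Nonempty := by
    obtain ⟨b0, hb0I, hb0⟩ := Submodule.exists_mem_ne_zero_of_ne_bot hI
    have h1 : ι b0 ≠ 0 := by
      intro h
      exact hb0 (hιinj (by rw [h, map_zero]))
    have h2 : v (ι b0) ≠ ⊤ :=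
      fun h => h1 (IsDiscreteValuationRing.addVal_eq_top_iff.mp h)
    obtain ⟨n, hn⟩ := WithTop.ne_top_iff_exists.mp h2
    exact ⟨n, b0, hb0I, hn.symm⟩
  obtain ⟨a, haI, hav⟩ : ∃ a ∈ I, v (ι a) = ((sInf S : ℕ) : ℕ∞) := Nat.sInf_mem hSne
  have ha0 : a ≠ 0 := by
    intro h
    rw [h, map_zero, hvdef, IsDiscreteValuationRing.addVal_zero] at hav
    exact (WithTop.top_ne_coe) hav
  -- key existence-uniqueness
  have key : ∀ b : ↥I, ∃! r : R, r * a = c * (b : R) := by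
    intro b
    have hex : ∃ r : R, r * a = c * (b : R) := by
      by_cases hb : (b : R) = 0
      · exact ⟨0, by rw [hb, zero_mul, mul_zero]⟩
      · have hbne : ι b ≠ 0 := fun h => hb (hιinj (by rw [h, map_zero]))
        have h2 : v (ι b) ≠ ⊤ :=
          fun h => hbne (IsDiscreteValuationRing.addVal_eq_top_iff.mp h)
        obtain ⟨m, hm⟩ := WithTop.ne_top_iff_exists.mp h2
        have hmS : m ∈ S := ⟨b, b.2, hm.symm⟩
        have hle : v (ι a) ≤ v (ι b) := by
          rw [hav, ← hm]
          exact WithTop.coe_le_coe.mpr (Nat.sInf_le hmS)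
        have hdvd : ι a ∣ ι b := IsDiscreteValuationRing.addVal_le_iff_dvd.mp hle
        obtain ⟨y, hy⟩ := hdvd
        obtain ⟨r, hr⟩ := hc (y : FractionRing R) y.2
        refine ⟨r, hinj ?_⟩
        have hq : algebraMap R (FractionRing R) (b : R)
            = algebraMap R (FractionRing R) a * (y : FractionRing R) := by
          have h3 := congrArg (Subtype.val) hy
          rw [← hcoe a, ← hcoe (b : R)]
          exact h3
        rw [map_mul, map_mul, hr, hq]
        ring
    obtain ⟨r, hr⟩ := hex
    refine ⟨r, hr, fun r' hr' => ?_⟩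
    exact mul_right_cancel₀ ha0 (by rw [hr, hr'])
  let f : ↥I → R := fun b => (key b).choose
  have hf : ∀ b : ↥I, f b * a = c * (b : R) := fun b => (key b).choose_spec.1
  have hfu : ∀ (b : ↥I) (r : R), r * a = c * (b : R) → f b = r := by
    intro b r hr
    exact mul_right_cancel₀ ha0 (by rw [hf b, hr])
  let φ : ↥I →ₗ[R] R :=
    { toFun := f
      map_add' := by
        intro b1 b2
        refine hfu _ _ ?_
        rw [add_mul, hf b1, hf b2, ← mul_add, Submodule.coe_add]
      map_smul' := by
        intro s b
        have : (s * f b) * a = c * ((s • b : ↥I) : R) := by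
          rw [Submodule.coe_smul, smul_eq_mul]
          rw [mul_assoc, hf b]; ring
        simp only [RingHom.id_apply]
        rw [hfu _ _ this]
        rfl }
  have hca : φ ⟨a, haI⟩ = c := hfu ⟨a, haI⟩ c rfl
  have : c ∈ LinearMap.range φ := ⟨⟨a, haI⟩, hca⟩
  have hle : LinearMap.range φ ≤ traceIdeal I :=
    le_iSup (fun ψ : ↥I →ₗ[R] R => LinearMap.range ψ) φ
  exact hle this
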